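/- Let L ≥ 1 and for 1 ≤ j ≤ L let δ_j = 1/2 − b(j) and \bar δ_j = 1/2 + b(j) where |b(j)| < 1/2. Define a_r = (∏_{j=1}^{r−1} \bar δ_j)(∏_{j=r+1}^{L} δ_j) and \bar a_r = (∏_{j=1}^{r−1} δ_j)(∏_{j=r+1}^{L} \bar δ_j). Then (∑_{r=1}^L a_r)(∑_{r=1}^L \bar a_r) ≥ 4 L² ∏_{k=1}^L δ_k \bar δ_k. -/

import Mathlib

open Finset

theorem stmt_1 (L : ℕ) (hL : 1 ≤ L) (b : ℕ → ℝ)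
    (hb : ∀ j, 1 ≤ j → j ≤ L → |b j| < 1/2) :
    (∑ r ∈ Icc 1 L, (∏ j ∈ Icc 1 (r-1), (1/2 + b j)) * (∏ j ∈ Icc (r+1) L, (1/2 - b j))) *
      (∑ r ∈ Icc 1 L, (∏ j ∈ Icc 1 (r-1), (1/2 - b j)) * (∏ j ∈ Icc (r+1) L, (1/2 + b j)))
    ≥ 4 * (L : ℝ)^2 * ∏ k ∈ Icc 1 L, ((1/2 - b k) * (1/2 + b k)) := by
  have hbp : ∀ j, 1 ≤ j → j ≤ L → 0 < 1/2 + b j := by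
    intro j h1 h2; have := abs_lt.mp (hb j h1 h2); linarith [this.1]
  have hbm : ∀ j, 1 ≤ j → j ≤ L → 0 < 1/2 - b j := by
    intro j h1 h2; have := abs_lt.mp (hb j h1 h2); linarith [this.2]
  set P : ℝ := ∏ k ∈ Icc 1 L, ((1/2 - b k) * (1/2 + b k)) with hP
  have hPpos : 0 < P := by
    apply Finset.prod_pos
    intro j hj
    simp only [mem_Icc] at hj
    exact mul_pos (hbm j hj.1 hj.2) (hbp j hj.1 hj.2)
  set a : ℕ → ℝ := fun r => (∏ j ∈ Icc 1 (r-1), (1/2 + b j)) * (∏ j ∈ Icc (r+1) L, (1/2 - b j)) with ha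
  set a' : ℕ → ℝ := fun r => (∏ j ∈ Icc 1 (r-1), (1/2 - b j)) * (∏ j ∈ Icc (r+1) L, (1/2 + b j)) with ha'
  have hapos : ∀ r ∈ Icc 1 L, 0 ≤ a r := by
    intro r hr
    simp only [mem_Icc] at hr
    apply mul_nonneg
    · apply Finset.prod_nonneg; intro j hj; simp only [mem_Icc] at hj
      exact le_of_lt (hbp j hj.1 (le_trans hj.2 (le_trans (Nat.sub_le r 1) hr.2)))
    · apply Finset.prod_nonneg; intro j hj; simp only [mem_Icc] at hj
      exact le_of_lt (hbm j (le_trans hr.1 (le_trans (Nat.le_succ r) hj.1)) hj.2)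
  have ha'pos : ∀ r ∈ Icc 1 L, 0 ≤ a' r := by
    intro r hr
    simp only [mem_Icc] at hr
    apply mul_nonneg
    · apply Finset.prod_nonneg; intro j hj; simp only [mem_Icc] at hj
      exact le_of_lt (hbm j hj.1 (le_trans hj.2 (le_trans (Nat.sub_le r 1) hr.2)))
    · apply Finset.prod_nonneg; intro j hj; simp only [mem_Icc] at hj
      exact le_of_lt (hbp j (le_trans hr.1 (le_trans (Nat.le_succ r) hj.1)) hj.2)
  -- key: a r * a' r ≥ 4 * P
  have key : ∀ r ∈ Icc 1 L, 4 * P ≤ a r * a' r := by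
    intro r hr
    simp only [mem_Icc] at hr
    obtain ⟨hr1, hr2⟩ := hr
    have hsplit : P = (∏ k ∈ Icc 1 (r-1), ((1/2 - b k) * (1/2 + b k))) *
        ((1/2 - b r) * (1/2 + b r)) * (∏ k ∈ Icc (r+1) L, ((1/2 - b k) * (1/2 + b k))) := by
      have e1 : Icc 1 L = Ioc 0 L := rfl
      have e2 : Icc 1 (r-1) = Ioc 0 (r-1) := rfl
      have e3 : Icc (r+1) L = Ioc r L := by
        ext x; simp [Nat.succ_le_iff, mem_Icc, mem_Ioc]
      rw [hP, e1, e2, e3,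
        ← Finset.prod_Ioc_consecutive _ (Nat.zero_le r) hr2]
      congr 1
      have : r = (r - 1) + 1 := (Nat.succ_pred_eq_of_pos hr1).symm
      rw [this, Finset.prod_Ioc_succ_top (Nat.zero_le _)]
      rw [← this]
    have haa : a r * a' r = (∏ k ∈ Icc 1 (r-1), ((1/2 - b k) * (1/2 + b k))) *
        (∏ k ∈ Icc (r+1) L, ((1/2 - b k) * (1/2 + b k))) := by
      simp only [ha, ha', Finset.prod_mul_distrib]
      ring
    have hbr : (1/2 - b r) * (1/2 + b r) ≤ 1/4 := by
      nlinarith [sq_nonneg (b r)]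
    have hbrpos : 0 < (1/2 - b r) * (1/2 + b r) :=
      mul_pos (hbm r hr1 hr2) (hbp r hr1 hr2)
    have hrest : 0 < (∏ k ∈ Icc 1 (r-1), ((1/2 - b k) * (1/2 + b k))) *
        (∏ k ∈ Icc (r+1) L, ((1/2 - b k) * (1/2 + b k))) := by
      apply mul_pos <;> apply Finset.prod_pos <;> intro j hj <;> simp only [mem_Icc] at hj
      · exact mul_pos (hbm j hj.1 (le_trans hj.2 (le_trans (Nat.sub_le r 1) hr2)))
          (hbp j hj.1 (le_trans hj.2 (le_trans (Nat.sub_le r 1) hr2)))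
      · exact mul_pos (hbm j (le_trans hr1 (le_trans (Nat.le_succ r) hj.1)) hj.2)
          (hbp j (le_trans hr1 (le_trans (Nat.le_succ r) hj.1)) hj.2)
    rw [haa, hsplit]
    nlinarith [hrest, hbr, hbrpos]
  -- sqrt lower bound
  have hsum : (L : ℝ) * (2 * Real.sqrt P) ≤ ∑ r ∈ Icc 1 L, Real.sqrt (a r) * Real.sqrt (a' r) := by
    have : ∀ r ∈ Icc 1 L, 2 * Real.sqrt P ≤ Real.sqrt (a r) * Real.sqrt (a' r) := by
      intro r hr
      rw [← Real.sqrt_mul (hapos r hr)]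
      have h4P : (4 : ℝ) * P = (2 * Real.sqrt P)^2 := by
        rw [mul_pow, Real.sq_sqrt hPpos.le]; ring
      have := Real.sqrt_le_sqrt (key r hr)
      rwa [h4P, Real.sqrt_sq (by positivity)] at this
    calc (L : ℝ) * (2 * Real.sqrt P)
        = ∑ _r ∈ Icc 1 L, 2 * Real.sqrt P := by
          rw [Finset.sum_const, Nat.card_Icc, nsmul_eq_mul]
          simp
      _ ≤ _ := Finset.sum_le_sum this
  have cauchy : (∑ r ∈ Icc 1 L, Real.sqrt (a r) * Real.sqrt (a' r))^2 ≤
      (∑ r ∈ Icc 1 L, a r) * (∑ r ∈ Icc 1 L, a' r) := by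
    have := Finset.sum_mul_sq_le_sq_mul_sq (Icc 1 L) (fun r => Real.sqrt (a r))
      (fun r => Real.sqrt (a' r))
    calc (∑ r ∈ Icc 1 L, Real.sqrt (a r) * Real.sqrt (a' r))^2
        ≤ (∑ r ∈ Icc 1 L, Real.sqrt (a r)^2) * (∑ r ∈ Icc 1 L, Real.sqrt (a' r)^2) := this
      _ = (∑ r ∈ Icc 1 L, a r) * (∑ r ∈ Icc 1 L, a' r) := by
          congr 1 <;> apply Finset.sum_congr rfl <;> intro r hr
          · exact Real.sq_sqrt (hapos r hr)
          · exact Real.sq_sqrt (ha'pos r hr)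
  have hLhs : 4 * (L : ℝ)^2 * P = ((L : ℝ) * (2 * Real.sqrt P))^2 := by
    rw [mul_pow, mul_pow, Real.sq_sqrt hPpos.le]; ring
  rw [ge_iff_le, hLhs]
  calc ((L : ℝ) * (2 * Real.sqrt P))^2
      ≤ (∑ r ∈ Icc 1 L, Real.sqrt (a r) * Real.sqrt (a' r))^2 := by
        apply pow_le_pow_left₀ (by positivity) hsum
    _ ≤ _ := cauchy
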